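/- Let ρ_C, ρ_L, α > 0 and τ_C, τ_B, τ_I > 0, and suppose (1/(τ_C ρ_C))(1 − τ_B/(τ_B + τ_I(1 + τ_B ρ_L))) < I_0 < 1/(τ_C ρ_C). Then every complex root of the characteristic polynomial of the Jacobian J evaluated at the equilibrium P_2 = (C_2, 0, B_2), where C_2 = (1/α)(I_0/(τ_I(1/(τ_C ρ_C) − I_0)) − 1/τ_B) and B_2 = 1/(τ_C ρ_C) − I_0, has strictly negative real part; i.e. P_2 is linearly asymptotically stable. -/

import Mathlib

open Polynomial Matrix

lemma quad_root_re_neg (a b : ℝ) (ha : 0 < a) (hb : 0 < b) (z : ℂ)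
    (h : z ^ 2 + (a : ℂ) * z + (b : ℂ) = 0) : z.re < 0 := by
  set x := z.re with hx
  set y := z.im with hy
  have hre : x ^ 2 - y ^ 2 + a * x + b = 0 := by
    have := congrArg Complex.re h
    simp [pow_two, Complex.mul_re, Complex.add_re, Complex.ofReal_re, Complex.ofReal_im] at this
    nlinarith [this]
  have him : y * (2 * x + a) = 0 := by
    have := congrArg Complex.im h
    simp [pow_two, Complex.mul_im, Complex.add_im, Complex.ofReal_re, Complex.ofReal_im] at this
    nlinarith [this]
  by_contra hcon
  push_neg at hcon
  have h2 : 0 < 2 * x + a := by linarith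
  have hy0 : y = 0 := by
    rcases mul_eq_zero.mp him with h' | h'
    · exact h'
    · linarith
  rw [hy0] at hre
  nlinarith

/-- **Asymptotic stability of `P₂`.**
If `(1/(τCρC))(1 − τB/(τB + τI(1 + τBρL))) < I₀ < 1/(τCρC)`, then every complex root
of the characteristic polynomial of the Jacobian of the CAR T-cell therapy model at
`P₂ = (C₂, 0, B₂)`, where `C₂ = (1/α)(I₀/(τI(1/(τCρC) − I₀)) − 1/τB)` and
`B₂ = 1/(τCρC) − I₀`, has strictly negative real part; i.e. `P₂` is linearly
asymptotically stable. -/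
theorem P2_linearly_stable
    (ρC ρL α I₀ τC τB τI : ℝ)
    (hρC : 0 < ρC) (hρL : 0 < ρL) (hα : 0 < α)
    (hτC : 0 < τC) (hτB : 0 < τB) (hτI : 0 < τI)
    (hlow : (1 / (τC * ρC)) * (1 - τB / (τB + τI * (1 + τB * ρL))) < I₀)
    (hhigh : I₀ < 1 / (τC * ρC))
    (C₂ B₂ : ℝ)
    (hC₂ : C₂ = (1 / α) * (I₀ / (τI * (1 / (τC * ρC) - I₀)) - 1 / τB))
    (hB₂ : B₂ = 1 / (τC * ρC) - I₀)
    (J : ℝ → ℝ → ℝ → Matrix (Fin 3) (Fin 3) ℝ)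
    (hJ : J = fun C L B =>
      !![ρC * (L + B + I₀) - 1 / τC, ρC * C, ρC * C;
         -(α * L), ρL - α * C, 0;
         -(α * B), 0, -(α * C) - 1 / τB]) :
    ∀ z : ℂ, (Polynomial.aeval z) (J C₂ 0 B₂).charpoly = 0 → z.re < 0 := by
  have hB' : 0 < 1 / (τC * ρC) - I₀ := by linarith
  have hB2 : 0 < B₂ := by rw [hB₂]; linarith
  have hD : 0 < τB + τI * (1 + τB * ρL) := by positivity
  have hc1 : 0 < τC * ρC := by positivity
  -- key polynomial inequality from hlow
  have h1 : τI * (1 + τB * ρL) < I₀ * (τC * ρC) * (τB + τI * (1 + τB * ρL)) := by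
    have h := hlow
    rw [div_mul_eq_mul_div, div_lt_iff₀ hc1] at h
    have h' : 1 - τB / (τB + τI * (1 + τB * ρL)) =
        τI * (1 + τB * ρL) / (τB + τI * (1 + τB * ρL)) := by field_simp; ring
    rw [h', one_mul, div_lt_iff₀ hD] at h
    nlinarith [h]
  have hkey : τI * (1 + τB * ρL) * (1 / (τC * ρC) - I₀) < I₀ * τB := by
    have e : 1 / (τC * ρC) - I₀ = (1 - I₀ * (τC * ρC)) / (τC * ρC) := by field_simp
    rw [e, mul_div_assoc', div_lt_iff₀ hc1]
    nlinarith [h1]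
  have hACgen : ∀ t : ℝ, 0 < t →
      α * (1 / α * (I₀ / t - 1 / τB)) * (t * τB) = I₀ * τB - t := by
    intro t ht
    field_simp
  have hAC : α * C₂ * (τI * (1 / (τC * ρC) - I₀) * τB) =
      I₀ * τB - τI * (1 / (τC * ρC) - I₀) := by
    rw [hC₂]
    exact hACgen _ (by positivity)
  have hc : ρL < α * C₂ := by
    nlinarith [hAC, hkey, mul_pos (mul_pos hτI hB') hτB]
  have hC2 : 0 < C₂ := by nlinarith [hc, hρL, hα]
  intro z hz
  have hM : J C₂ 0 B₂ =
      !![0, ρC * C₂, ρC * C₂; 0, ρL - α * C₂, 0;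
         -(α * B₂), 0, -(α * C₂) - 1 / τB] := by
    rw [hJ]
    have h00 : ρC * (0 + B₂ + I₀) - 1 / τC = 0 := by rw [hB₂]; field_simp; ring
    ext i j
    fin_cases i <;> fin_cases j <;> simp <;> simp at h00 <;> linarith [h00]
  have key : (aeval z) (J C₂ 0 B₂).charpoly =
      (z - ((ρL - α * C₂ : ℝ) : ℂ)) *
        (z ^ 2 + ((α * C₂ + 1 / τB : ℝ) : ℂ) * z + ((ρC * C₂ * (α * B₂) : ℝ) : ℂ)) := by
    rw [hM, Matrix.charpoly, AlgHom.map_det, Matrix.det_fin_three]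
    simp [charmatrix_apply, Matrix.map_apply]
    push_cast
    ring
  rw [key] at hz
  rcases mul_eq_zero.mp hz with h' | h'
  · have hzz : z = ((ρL - α * C₂ : ℝ) : ℂ) := by linear_combination h'
    rw [hzz, Complex.ofReal_re]
    linarith
  · exact quad_root_re_neg _ _ (by positivity)
      (mul_pos (mul_pos hρC hC2) (mul_pos hα hB2)) z h'
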